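/- Let m > 2 be even and let G = D_{2m} be the dihedral group of order 2m (Mathlib's DihedralGroup m). Then the characteristic polynomial of the adjacency matrix of the commuting graph Γ_G (over the reals) equals (X + 1)^(3m/2 − 3) · (X − 1)^(m/2) · (X − (m − 3)); in particular G is commuting integral. -/

import Mathlib

open Polynomial
open Matrix


lemma zmod_two_mul (m : ℕ) (hm : 2 < m) (hmeven : Even m) (i : ZMod m) :
    i + i = 0 ↔ i = 0 ∨ i = ((m / 2 : ℕ) : ZMod m) := by
  have : NeZero m := ⟨by omega⟩
  have hv2 : ∀ j : ZMod m, ((j.val : ℕ) : ZMod m) = j := ZMod.natCast_rightInverse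
  constructor
  · intro h
    have hv : ((i.val + i.val : ℕ) : ZMod m) = 0 := by push_cast [hv2]; exact h
    rw [ZMod.natCast_eq_zero_iff] at hv
    have hlt := ZMod.val_lt i
    have h01 : i.val + i.val = 0 ∨ i.val + i.val = m := by
      rcases hv with ⟨c, hc⟩
      have hc2 : c < 2 := by nlinarith
      interval_cases c <;> omega
    obtain ⟨k, hk⟩ := hmeven
    rcases h01 with h0 | h1
    · left; rw [← hv2 i]; simp [show i.val = 0 by omega]
    · right; rw [← hv2 i]; congr 1; omega
  · rintro (rfl | rfl)
    · simp
    · have h2 : ((m / 2 : ℕ) : ZMod m) + ((m / 2 : ℕ) : ZMod m) = ((m / 2 + m / 2 : ℕ) : ZMod m) := by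
        push_cast; ring
      rw [h2]
      obtain ⟨k, hk⟩ := hmeven
      have h3 : m / 2 + m / 2 = m := by omega
      simp [h3]

lemma center_dihedral (m : ℕ) (hm : 2 < m) (hmeven : Even m) (x : DihedralGroup m) :
    x ∈ Subgroup.center (DihedralGroup m) ↔
      x = DihedralGroup.r 0 ∨ x = DihedralGroup.r ((m / 2 : ℕ) : ZMod m) := by
  have : NeZero m := ⟨by omega⟩
  rw [Subgroup.mem_center_iff]
  constructor
  · intro h
    rcases x with i | i
    · have h1 := h (DihedralGroup.sr 0)
      simp only [DihedralGroup.sr_mul_r, DihedralGroup.r_mul_sr, zero_add, zero_sub,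
        DihedralGroup.sr.injEq] at h1
      have : i + i = 0 := by linear_combination h1
      rcases (zmod_two_mul m hm hmeven i).mp this with rfl | rfl
      · exact Or.inl rfl
      · exact Or.inr rfl
    · exfalso
      have h1 := h (DihedralGroup.r 1)
      simp only [DihedralGroup.r_mul_sr, DihedralGroup.sr_mul_r, DihedralGroup.sr.injEq] at h1
      have h2 : (1 : ZMod m) + 1 = 0 := by linear_combination (-1 : ZMod m) * h1
      have : Fact (1 < m) := ⟨by omega⟩
      rcases (zmod_two_mul m hm hmeven 1).mp h2 with h3 | h3
      · have hval : (1 : ZMod m).val = (0 : ZMod m).val := by rw [h3]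
        rw [ZMod.val_one, ZMod.val_zero] at hval
        omega
      · have hval : (1 : ZMod m).val = ((m / 2 : ℕ) : ZMod m).val := by rw [h3]
        rw [ZMod.val_one, ZMod.val_cast_of_lt (by omega)] at hval
        obtain ⟨k, hk⟩ := hmeven
        omega
  · have key : ∀ i : ZMod m, i + i = 0 → ∀ g, g * DihedralGroup.r i = DihedralGroup.r i * g := by
      intro i hi g
      rcases g with j | j
      · simp [add_comm]
      · simp only [DihedralGroup.sr_mul_r, DihedralGroup.r_mul_sr, DihedralGroup.sr.injEq]
        linear_combination hi
    rintro (rfl | rfl)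
    · intro g; rw [← DihedralGroup.one_def, one_mul, mul_one]
    · intro g
      exact key _ ((zmod_two_mul m hm hmeven _).mpr (Or.inr rfl)) g


lemma eval_charpoly {ι : Type*} [Fintype ι] [DecidableEq ι] (M : Matrix ι ι ℝ) (t : ℝ) :
    eval t M.charpoly = (t • (1 : Matrix ι ι ℝ) - M).det := by
  have h := RingHom.map_det (evalRingHom t) M.charmatrix
  rw [Matrix.charpoly]
  rw [show eval t M.charmatrix.det = (evalRingHom t) M.charmatrix.det from rfl, h]
  congr 1
  ext i j
  by_cases h : i = j <;>
    simp [h, Matrix.charmatrix_apply, Matrix.one_apply, Matrix.smul_apply, Matrix.sub_apply,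
      Matrix.diagonal_apply]

lemma charpoly_complete {ι : Type*} [Fintype ι] [DecidableEq ι] (c : ℕ)
    (hc : Fintype.card ι = c) (hc0 : 0 < c) :
    (Matrix.of fun i j : ι => if i = j then (0:ℝ) else 1).charpoly =
      (X + 1) ^ (c - 1) * (X - C ((c : ℝ) - 1)) := by
  apply Polynomial.eq_of_infinite_eval_eq
  apply Set.Infinite.mono (s := {(-1 : ℝ)}ᶜ)
  swap
  · exact (Set.finite_singleton _).infinite_compl
  intro t ht
  simp only [Set.mem_compl_iff, Set.mem_singleton_iff] at ht
  have hs : t + 1 ≠ 0 := fun h => ht (by linarith)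
  simp only [Set.mem_setOf_eq]
  rw [_root_.eval_charpoly]
  have key : t • (1 : Matrix ι ι ℝ) - Matrix.of (fun i j : ι => if i = j then (0:ℝ) else 1) =
      (t + 1) • ((1 : Matrix ι ι ℝ) +
        Matrix.replicateCol Unit (fun _ : ι => -(t+1)⁻¹) * Matrix.replicateRow Unit (fun _ : ι => (1:ℝ))) := by
    ext i j
    by_cases h : i = j
    · simp only [h, Matrix.sub_apply, Matrix.smul_apply, Matrix.one_apply_eq, Matrix.of_apply,
        if_pos rfl, Matrix.add_apply, Matrix.mul_apply, Finset.univ_unique, Finset.sum_singleton,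
        Matrix.replicateCol_apply, Matrix.replicateRow_apply, smul_eq_mul]
      field_simp
      norm_num
    · simp only [Matrix.sub_apply, Matrix.smul_apply, Matrix.one_apply_ne h, Matrix.of_apply,
        if_neg h, Matrix.add_apply, Matrix.mul_apply, Finset.univ_unique, Finset.sum_singleton,
        Matrix.replicateCol_apply, Matrix.replicateRow_apply, smul_eq_mul]
      field_simp
      ring
  rw [key, Matrix.det_smul, Matrix.det_one_add_replicateCol_mul_replicateRow]
  have hdot : (fun _ : ι => (1:ℝ)) ⬝ᵥ (fun _ : ι => -(t+1)⁻¹) = -(c : ℝ) * (t+1)⁻¹ := by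
    simp [dotProduct, Finset.sum_const, hc]
  rw [hdot, hc]
  have hcc : (t+1)^c = (t+1)^(c-1) * (t+1) := by
    rw [← pow_succ]; congr 1; omega
  rw [hcc]
  field_simp
  simp only [eval_sub, eval_mul, eval_X, eval_pow, eval_add, eval_one, eval_C]
  ring


lemma charmatrix_blockDiagonal {κ n : Type*} [Fintype κ] [DecidableEq κ] [Fintype n]
    [DecidableEq n] {R : Type*} [CommRing R] (M : κ → Matrix n n R) :
    charmatrix (blockDiagonal M) = blockDiagonal (fun k => charmatrix (M k)) := by
  ext ⟨i, k⟩ ⟨j, l⟩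
  by_cases h : k = l
  · subst h
    by_cases h2 : i = j <;>
      simp [h2, charmatrix_apply, blockDiagonal_apply, diagonal_apply, Prod.ext_iff]
  · simp [charmatrix_apply, blockDiagonal_apply, diagonal_apply, Prod.ext_iff, h]

lemma charpoly_blockDiagonal_const {κ n : Type*} [Fintype κ] [DecidableEq κ] [Fintype n]
    [DecidableEq n] {R : Type*} [CommRing R] (B : Matrix n n R) :
    (blockDiagonal (fun _ : κ => B)).charpoly = B.charpoly ^ Fintype.card κ := by
  rw [Matrix.charpoly, charmatrix_blockDiagonal, Matrix.det_blockDiagonal]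
  simp [Matrix.charpoly, Finset.prod_const, Finset.card_univ]

lemma charpoly_K2 : (!![(0:ℝ),1;1,0]).charpoly = (X - 1) * (X + 1) := by
  rw [Matrix.charpoly, Matrix.det_fin_two]
  simp [charmatrix_apply, diagonal_apply]
  ring


/-- The commuting graph of a group `G`: vertices are the non-central elements,
two distinct vertices are adjacent iff they commute. -/
def commutingGraph (G : Type*) [Group G] : SimpleGraph {x : G // x ∉ Subgroup.center G} where
  Adj x y := x ≠ y ∧ (x : G) * y = (y : G) * x
  symm := by constructor; rintro x y ⟨hne, hc⟩; exact ⟨hne.symm, hc.symm⟩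
  loopless := by constructor; rintro x ⟨hne, _⟩; exact hne rfl

open scoped Classical in
/-- The characteristic polynomial (over `ℝ`) of the adjacency matrix of the
commuting graph of `G`. -/
noncomputable def commCharpoly (G : Type*) [Group G] [Fintype G] : Polynomial ℝ :=
  ((commutingGraph G).adjMatrix ℝ).charpoly

open Matrix

lemma commutingGraph_adj {G : Type*} [Group G] (x y : {x : G // x ∉ Subgroup.center G}) :
    (commutingGraph G).Adj x y ↔ x ≠ y ∧ (x : G) * y = (y : G) * x := Iff.rfl


section main
open Matrix
variable (m : ℕ) [NeZero m] (hm : 2 < m) (hmeven : Even m)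

lemma fin2_prod (x : Fin 2) :
    (x : ℕ) = 0 ∧ m / 2 * (x : ℕ) = 0 ∨ (x : ℕ) = 1 ∧ m / 2 * (x : ℕ) = m / 2 := by
  rcases (by omega : (x : ℕ) = 0 ∨ (x : ℕ) = 1) with h | h <;> simp [h]

noncomputable def dihedralVertexMap :
    ({i : ZMod m // ¬(i = 0 ∨ i = ((m / 2 : ℕ) : ZMod m))} ⊕ (Fin 2 × Fin (m / 2))) →
      {x : DihedralGroup m // x ∉ Subgroup.center (DihedralGroup m)} := fun p =>
  match p with
  | Sum.inl ⟨i, hi⟩ => ⟨DihedralGroup.r i, by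
      rw [center_dihedral m hm hmeven]
      simpa [DihedralGroup.r.injEq, -DihedralGroup.r_zero] using hi⟩
  | Sum.inr (b, a) => ⟨DihedralGroup.sr (((a : ℕ) + (m / 2) * (b : ℕ) : ℕ) : ZMod m), by
      rw [center_dihedral m hm hmeven]
      simp [-DihedralGroup.r_zero]⟩

lemma dihedralVertexMap_bijective :
    Function.Bijective (dihedralVertexMap m hm hmeven) := by
  obtain ⟨k, hk⟩ := id hmeven
  have hm2 : m / 2 + m / 2 = m := by omega
  constructor
  · rintro (⟨i, hi⟩ | ⟨b, a⟩) (⟨j, hj⟩ | ⟨b', a'⟩) h <;>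
      simp only [dihedralVertexMap, Subtype.mk.injEq, DihedralGroup.r.injEq,
        DihedralGroup.sr.injEq, reduceCtorEq] at h
    · simp [h]
    · have e1 := fin2_prod m b; have e2 := fin2_prod m b'
      have ha := a.isLt; have hb := b.isLt; have ha' := a'.isLt; have hb' := b'.isLt
      have hlt : (a : ℕ) + m / 2 * (b : ℕ) < m := by omega
      have hlt' : (a' : ℕ) + m / 2 * (b' : ℕ) < m := by omega
      have hv := congrArg ZMod.val h
      rw [ZMod.val_cast_of_lt hlt, ZMod.val_cast_of_lt hlt'] at hv
      have : (b : ℕ) = (b' : ℕ) ∧ (a : ℕ) = (a' : ℕ) := by omega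
      simp [Prod.ext_iff, Fin.ext_iff, this.1, this.2]
  · rintro ⟨(i | j), hx⟩
    · refine ⟨Sum.inl ⟨i, ?_⟩, rfl⟩
      rw [center_dihedral m hm hmeven] at hx
      simpa [DihedralGroup.r.injEq, -DihedralGroup.r_zero] using hx
    · have hj := ZMod.val_lt j
      have hb : j.val / (m / 2) < 2 := Nat.div_lt_of_lt_mul (by omega)
      have hma : 0 < m / 2 := by omega
      refine ⟨Sum.inr (⟨j.val / (m / 2), hb⟩, ⟨j.val % (m / 2), Nat.mod_lt _ hma⟩), ?_⟩
      simp only [dihedralVertexMap, Subtype.mk.injEq, DihedralGroup.sr.injEq]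
      rw [Nat.mod_add_div]
      exact ZMod.natCast_rightInverse j

noncomputable def dihedralBlockMatrix :
    Matrix ({i : ZMod m // ¬(i = 0 ∨ i = ((m / 2 : ℕ) : ZMod m))} ⊕ (Fin 2 × Fin (m / 2)))
      ({i : ZMod m // ¬(i = 0 ∨ i = ((m / 2 : ℕ) : ZMod m))} ⊕ (Fin 2 × Fin (m / 2))) ℝ :=
  fromBlocks (Matrix.of fun i j => if i = j then (0:ℝ) else 1) 0 0
    (blockDiagonal (fun _ : Fin (m / 2) =>
      Matrix.of fun b b' : Fin 2 => if b = b' then (0:ℝ) else 1))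

open scoped Classical in
set_option maxHeartbeats 1000000 in
lemma dihedral_adj_eq : ∀ p q,
    dihedralBlockMatrix m p q =
      (commutingGraph (DihedralGroup m)).adjMatrix ℝ
        (dihedralVertexMap m hm hmeven p) (dihedralVertexMap m hm hmeven q) := by
  classical
  obtain ⟨k, hk⟩ := id hmeven
  have hm2 : m / 2 + m / 2 = m := by omega
  rintro (⟨i, hi⟩ | ⟨b, a⟩) (⟨j, hj⟩ | ⟨b', a'⟩) <;>
    simp only [dihedralBlockMatrix, dihedralVertexMap, fromBlocks_apply₁₁, fromBlocks_apply₁₂,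
      fromBlocks_apply₂₁, fromBlocks_apply₂₂, SimpleGraph.adjMatrix_apply,
      Matrix.of_apply, Matrix.zero_apply]
  · -- rotation-rotation
    by_cases h : i = j
    · subst h
      rw [if_pos rfl, if_neg]
      simp [commutingGraph_adj]
    · rw [if_neg (fun hc : (⟨i, hi⟩ : {i : ZMod m // ¬(i = 0 ∨ i = ((m / 2 : ℕ) : ZMod m))}) = ⟨j, hj⟩ => h (by simpa [Subtype.ext_iff] using hc)), if_pos]
      rw [commutingGraph_adj]
      exact ⟨by simp [Subtype.ext_iff, DihedralGroup.r.injEq, h], by simp [add_comm]⟩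
  · -- rotation-reflection
    rw [eq_comm, if_neg]
    rw [commutingGraph_adj]
    rintro ⟨-, hc⟩
    simp only [DihedralGroup.r_mul_sr, DihedralGroup.sr_mul_r, DihedralGroup.sr.injEq] at hc
    have h2 : i + i = 0 := by linear_combination -hc
    exact hi ((zmod_two_mul m hm hmeven i).mp h2)
  · -- reflection-rotation
    rw [eq_comm, if_neg]
    rw [commutingGraph_adj]
    rintro ⟨-, hc⟩
    simp only [DihedralGroup.r_mul_sr, DihedralGroup.sr_mul_r, DihedralGroup.sr.injEq] at hc
    have h2 : j + j = 0 := by linear_combination hc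
    exact hj ((zmod_two_mul m hm hmeven j).mp h2)
  · -- reflection-reflection
    rw [Matrix.blockDiagonal_apply]
    have e1 := fin2_prod m b; have e2 := fin2_prod m b'
    have ha := a.isLt; have hb := b.isLt; have ha' := a'.isLt; have hb' := b'.isLt
    have hlt : (a : ℕ) + m / 2 * (b : ℕ) < m := by omega
    have hlt' : (a' : ℕ) + m / 2 * (b' : ℕ) < m := by omega
    have hadj : (commutingGraph (DihedralGroup m)).Adj
        ⟨DihedralGroup.sr (((a : ℕ) + m / 2 * (b : ℕ) : ℕ) : ZMod m), by
          rw [center_dihedral m hm hmeven]; simp [-DihedralGroup.r_zero]⟩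
        ⟨DihedralGroup.sr (((a' : ℕ) + m / 2 * (b' : ℕ) : ℕ) : ZMod m), by
          rw [center_dihedral m hm hmeven]; simp [-DihedralGroup.r_zero]⟩ ↔
        (a = a' ∧ b ≠ b') := by
      rw [commutingGraph_adj]
      have hxy : (⟨DihedralGroup.sr (((a : ℕ) + m / 2 * (b : ℕ) : ℕ) : ZMod m), by
          rw [center_dihedral m hm hmeven]; simp [-DihedralGroup.r_zero]⟩ :
            {x : DihedralGroup m // x ∉ Subgroup.center (DihedralGroup m)}) ≠
          ⟨DihedralGroup.sr (((a' : ℕ) + m / 2 * (b' : ℕ) : ℕ) : ZMod m), by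
          rw [center_dihedral m hm hmeven]; simp [-DihedralGroup.r_zero]⟩ ↔
          ¬((a : ℕ) = (a' : ℕ) ∧ (b : ℕ) = (b' : ℕ)) := by
        rw [ne_eq, Subtype.mk.injEq, DihedralGroup.sr.injEq, ZMod.natCast_eq_natCast_iff,
          Nat.ModEq, Nat.mod_eq_of_lt hlt, Nat.mod_eq_of_lt hlt']
        constructor
        · intro h hc; exact h (by omega)
        · intro h hc; exact h (by omega)
      rw [hxy]
      simp only [DihedralGroup.sr_mul_sr, DihedralGroup.r.injEq]
      have hcomm : ((((a' : ℕ) + m / 2 * (b' : ℕ) : ℕ) : ZMod m)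
            - (((a : ℕ) + m / 2 * (b : ℕ) : ℕ) : ZMod m)
          = (((a : ℕ) + m / 2 * (b : ℕ) : ℕ) : ZMod m)
            - (((a' : ℕ) + m / 2 * (b' : ℕ) : ℕ) : ZMod m)) ↔
          ((((a' : ℕ) + m / 2 * (b' : ℕ) : ℕ) : ZMod m)
            = (((a : ℕ) + m / 2 * (b : ℕ) + m / 2 : ℕ) : ZMod m)
           ∨ ((a : ℕ) = (a' : ℕ) ∧ (b : ℕ) = (b' : ℕ))) := by
        constructor
        · intro h
          have h2 : ((((a' : ℕ) + m / 2 * (b' : ℕ) : ℕ) : ZMod m)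
              - (((a : ℕ) + m / 2 * (b : ℕ) : ℕ) : ZMod m))
              + ((((a' : ℕ) + m / 2 * (b' : ℕ) : ℕ) : ZMod m)
              - (((a : ℕ) + m / 2 * (b : ℕ) : ℕ) : ZMod m)) = 0 := by
            linear_combination h
          rcases (zmod_two_mul m hm hmeven _).mp h2 with h3 | h3
          · right
            have h4 : (((a' : ℕ) + m / 2 * (b' : ℕ) : ℕ) : ZMod m)
                = (((a : ℕ) + m / 2 * (b : ℕ) : ℕ) : ZMod m) := by
              linear_combination h3
            rw [ZMod.natCast_eq_natCast_iff, Nat.ModEq, Nat.mod_eq_of_lt hlt,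
              Nat.mod_eq_of_lt hlt'] at h4
            omega
          · left
            push_cast
            push_cast at h3
            linear_combination h3
        · rintro (h | ⟨h1, h2⟩)
          · have : (((a' : ℕ) + m / 2 * (b' : ℕ) : ℕ) : ZMod m)
                - (((a : ℕ) + m / 2 * (b : ℕ) : ℕ) : ZMod m) = ((m / 2 : ℕ) : ZMod m) := by
              push_cast at h ⊢
              linear_combination h
            rw [this]
            have h5 : ((m / 2 : ℕ) : ZMod m) + ((m / 2 : ℕ) : ZMod m) = 0 :=
              (zmod_two_mul m hm hmeven _).mpr (Or.inr rfl)
            have h6 : (((a : ℕ) + m / 2 * (b : ℕ) : ℕ) : ZMod m)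
                - (((a' : ℕ) + m / 2 * (b' : ℕ) : ℕ) : ZMod m) = -(((m / 2 : ℕ)) : ZMod m) := by
              rw [← this]; ring
            rw [h6]
            linear_combination h5
          · rw [show (a : ℕ) + m / 2 * (b : ℕ) = (a' : ℕ) + m / 2 * (b' : ℕ) by omega]
        -- end hcomm
      rw [hcomm, ZMod.natCast_eq_natCast_iff, Nat.ModEq, Nat.mod_eq_of_lt hlt']
      have hmod : ((a : ℕ) + m / 2 * (b : ℕ) + m / 2) % m
          = if (b : ℕ) = 0 then (a : ℕ) + m / 2 else (a : ℕ) := by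
        rcases e1 with ⟨hb0, hp⟩ | ⟨hb1, hp⟩
        · rw [if_pos hb0, hp, Nat.mod_eq_of_lt (by omega)]
          omega
        · rw [if_neg (by omega), hp,
            show (a : ℕ) + m / 2 + m / 2 = (a : ℕ) + m by omega, Nat.add_mod_right,
            Nat.mod_eq_of_lt (by omega)]
      rw [hmod]
      constructor
      · rintro ⟨hne, h | h⟩
        · split_ifs at h with hb0
          · refine ⟨by omega, ?_⟩
            simp only [ne_eq, Fin.ext_iff]
            omega
          · refine ⟨by omega, ?_⟩
            simp only [ne_eq, Fin.ext_iff]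
            omega
        · exact absurd h hne
      · rintro ⟨haa, hbb⟩
        rw [Fin.ext_iff] at haa
        have hbb2 : (b : ℕ) ≠ (b' : ℕ) := fun h => hbb (Fin.ext h)
        refine ⟨by omega, Or.inl ?_⟩
        split_ifs with hb0 <;> omega
    rw [hadj]
    by_cases h1 : a = a' <;> by_cases h2 : b = b' <;>
      simp [h1, h2, Matrix.of_apply]
end main


lemma charpoly_inst_congr {R : Type*} [CommRing R] {n : Type*} (i1 i2 : DecidableEq n)
    (f1 f2 : Fintype n) (M : Matrix n n R) :
    @Matrix.charpoly R _ n i1 f1 M = @Matrix.charpoly R _ n i2 f2 M := by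
  obtain rfl : i1 = i2 := Subsingleton.elim _ _
  obtain rfl : f1 = f2 := Subsingleton.elim _ _
  rfl


open scoped Classical in
set_option maxHeartbeats 1000000 in
lemma dihedral_commCharpoly (m : ℕ) [NeZero m] (hm : 2 < m) (hmeven : Even m) :
    commCharpoly (DihedralGroup m) =
      (X + 1) ^ (3 * m / 2 - 3) * (X - 1) ^ (m / 2) * (X - C ((m : ℝ) - 3)) := by
  obtain ⟨k, hk⟩ := id hmeven
  have hm2 : m / 2 + m / 2 = m := by omega
  have h0c : ((0 : ZMod m) : ZMod m) ∉ ({((m / 2 : ℕ) : ZMod m)} : Finset (ZMod m)) := by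
    simp only [Finset.mem_singleton]
    intro h
    have := congrArg ZMod.val h
    rw [ZMod.val_zero, ZMod.val_cast_of_lt (by omega)] at this
    omega
  have hcard : Fintype.card {i : ZMod m // ¬(i = 0 ∨ i = ((m / 2 : ℕ) : ZMod m))} = m - 2 := by
    rw [Fintype.card_subtype]
    have heq : Finset.univ.filter (fun i : ZMod m => ¬(i = 0 ∨ i = ((m / 2 : ℕ) : ZMod m)))
        = Finset.univ \ {0, ((m / 2 : ℕ) : ZMod m)} := by
      ext i
      simp [not_or]
    rw [heq, Finset.card_sdiff_of_subset (Finset.subset_univ _), Finset.card_univ, ZMod.card,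
      Finset.card_insert_of_notMem h0c, Finset.card_singleton]
  set φ := Equiv.ofBijective _ (dihedralVertexMap_bijective m hm hmeven) with hφ
  have hfx : ∀ x, dihedralVertexMap m hm hmeven (φ.symm x) = x := fun x => φ.apply_symm_apply x
  have hM : (commutingGraph (DihedralGroup m)).adjMatrix ℝ
      = Matrix.reindex φ φ (dihedralBlockMatrix m) := by
    ext x y
    rw [Matrix.reindex_apply, Matrix.submatrix_apply,
      dihedral_adj_eq m hm hmeven (φ.symm x) (φ.symm y), hfx, hfx]
  have main2 : Matrix.charpoly ((commutingGraph (DihedralGroup m)).adjMatrix ℝ) =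
      (X + 1) ^ (3 * m / 2 - 3) * (X - 1) ^ (m / 2) * (X - C ((m : ℝ) - 3)) := by
    rw [hM, Matrix.charpoly_reindex]
    unfold dihedralBlockMatrix
    rw [Matrix.charpoly_fromBlocks_zero₁₂,
      charpoly_complete (m - 2) hcard (by omega),
      charpoly_blockDiagonal_const,
      charpoly_complete (ι := Fin 2) 2 (by simp) (by omega)]
    have h1 : ((m - 2 : ℕ) : ℝ) - 1 = (m : ℝ) - 3 := by
      rw [Nat.cast_sub (by omega)]
      push_cast
      ring
    have h2 : m - 2 - 1 = m - 3 := by omega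
    have h3 : 3 * m / 2 - 3 = (m - 3) + m / 2 := by omega
    have h4 : ((2 : ℕ) : ℝ) - 1 = 1 := by norm_num
    rw [h1, h2, h3, h4, Fintype.card_fin, pow_add]
    rw [show (C (1 : ℝ)) = 1 from map_one C, mul_pow]
    ring
  unfold commCharpoly
  exact (charpoly_inst_congr _ _ _ _ _).trans main2

theorem commuting_integral_dihedral_even
    (m : ℕ) [NeZero m] (hm : 2 < m) (hmeven : Even m) :
    commCharpoly (DihedralGroup m) =
        (X + 1) ^ (3 * m / 2 - 3) * (X - 1) ^ (m / 2) * (X - C ((m : ℝ) - 3)) ∧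
      ∀ μ : ℝ, (commCharpoly (DihedralGroup m)).IsRoot μ → ∃ k : ℤ, μ = (k : ℝ) := by
  obtain ⟨k, hk⟩ := id hmeven
  refine ⟨dihedral_commCharpoly m hm hmeven, ?_⟩
  intro μ hroot
  rw [dihedral_commCharpoly m hm hmeven] at hroot
  simp only [IsRoot, eval_mul, eval_pow, eval_add, eval_sub, eval_one, eval_X, eval_C,
    mul_eq_zero, pow_eq_zero_iff (by omega : 3 * m / 2 - 3 ≠ 0),
    pow_eq_zero_iff (by omega : m / 2 ≠ 0)] at hroot
  rcases hroot with (h | h) | h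
  · exact ⟨-1, by push_cast; linarith⟩
  · exact ⟨1, by push_cast; linarith⟩
  · exact ⟨(m : ℤ) - 3, by push_cast; linarith⟩
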